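/- Let G be a finite simple graph and let m be a matching on F(G) whose induced oriented cycles project to the pairwise vertex-disjoint cycles γ_1, …, γ_j of G. Then the number of arcs of m is at least ℓ(γ_1) + ⋯ + ℓ(γ_j), where ℓ(γ) denotes the length of the cycle γ. In particular, since every cycle in a simple graph has length at least 3, every matching m on F(G) with J(m) = j has at least 3j arcs; equivalently, the simplices of the matching complex M(G) in filtration degree j have dimension at least 3j − 1. -/

import Mathlib

/-- The arc relation of the face poset of a finite abstract simplicial complex `X`
(given as a finite family of finite faces): an arc from `σ` down to `τ` whenever
`τ` is a codimension-one face of `σ`. -/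
def FaceArc {V : Type*} (X : Finset (Finset V)) (σ τ : Finset V) : Prop :=
  σ ∈ X ∧ τ ∈ X ∧ τ ⊂ σ ∧ τ.card + 1 = σ.card

/-- The arc relation of the face poset of a simple graph `G`, regarded as a
1-dimensional simplicial complex: an arc from each edge-face `{u, v}` down to
each of its endpoint vertex-faces. -/
def GraphArc {V : Type*} [DecidableEq V] (G : SimpleGraph V) (σ τ : Finset V) : Prop :=
  ∃ u v : V, G.Adj u v ∧ σ = {u, v} ∧ (τ = {u} ∨ τ = {v})

/-- A matching on the digraph with arc relation `A`: a finite set of arcs,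
no two of which share an endpoint. -/
def IsMatching {α : Type*} (A : α → α → Prop) (m : Finset (α × α)) : Prop :=
  (∀ p ∈ m, A p.1 p.2) ∧
    ∀ p ∈ m, ∀ q ∈ m, p ≠ q →
      p.1 ≠ q.1 ∧ p.1 ≠ q.2 ∧ p.2 ≠ q.1 ∧ p.2 ≠ q.2

/-- The arc relation of the digraph obtained from the digraph with arc relation `A`
by reversing the arcs belonging to `m`. -/
def MStep {α : Type*} (A : α → α → Prop) (m : Finset (α × α)) (a b : α) : Prop :=
  (A a b ∧ (a, b) ∉ m) ∨ (A b a ∧ (b, a) ∈ m)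

/-- `IsCycleList R l` says the nonempty list `l` of pairwise distinct vertices is a
directed cycle of the digraph with arc relation `R` (consecutive steps, closing up). -/
def IsCycleList {α : Type*} (R : α → α → Prop) : List α → Prop
  | [] => False
  | a :: l => (a :: l).Nodup ∧ List.Chain R a (l ++ [a])

/-- The set of oriented cycles induced by the matching `m` on the digraph with arc
relation `A` (as lists of vertices; rotated lists represent the same cycle). -/
def cyclesOf {α : Type*} (A : α → α → Prop) (m : Finset (α × α)) : Set (List α) :=
  {l | IsCycleList (MStep A m) l}

/-- `numCycles A m` is `J(m)`, the number of oriented cycles induced by `m`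
(cycle lists counted up to rotation). -/
noncomputable def numCycles {α : Type*} (A : α → α → Prop) (m : Finset (α × α)) : ℕ :=
  (Quotient.mk (List.IsRotated.setoid α) '' cyclesOf A m).ncard
section Aux

lemma matching_eq_of_fst {α : Type*} {A : α → α → Prop} {m : Finset (α × α)}
    (hm : IsMatching A m) {p q : α × α} (hp : p ∈ m) (hq : q ∈ m) (h : p.1 = q.1) : p = q := by
  by_contra hne
  exact (hm.2 p hp q hq hne).1 h

lemma matching_eq_of_snd {α : Type*} {A : α → α → Prop} {m : Finset (α × α)}
    (hm : IsMatching A m) {p q : α × α} (hp : p ∈ m) (hq : q ∈ m) (h : p.2 = q.2) : p = q := by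
  by_contra hne
  exact (hm.2 p hp q hq hne).2.2.2 h

variable {V : Type*} [DecidableEq V] {G : SimpleGraph V}

lemma graphArc_cards {σ τ : Finset V} (h : GraphArc G σ τ) :
    σ.card = 2 ∧ τ.card = 1 ∧ τ ⊆ σ := by
  obtain ⟨u, v, huv, rfl, hτ⟩ := h
  have hne : u ≠ v := huv.ne
  refine ⟨?_, ?_, ?_⟩
  · rw [Finset.card_insert_of_notMem (by simp [hne]), Finset.card_singleton]
  · rcases hτ with rfl | rfl <;> simp
  · rcases hτ with rfl | rfl <;> intro x hx <;> simp at hx <;> simp [hx]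

lemma mem_pair_of_arc {u v : V} {τ : Finset V} (h : GraphArc G {u, v} τ) :
    τ = {u} ∨ τ = {v} := by
  obtain ⟨-, hc, hsub⟩ := graphArc_cards h
  obtain ⟨a, rfl⟩ := Finset.card_eq_one.mp hc
  have : a ∈ ({u, v} : Finset V) := hsub (Finset.mem_singleton_self a)
  rcases Finset.mem_insert.mp this with rfl | h'
  · exact Or.inl rfl
  · exact Or.inr (by rw [Finset.mem_singleton.mp h'])

lemma chain_pred {α : Type*} {R : α → α → Prop} :
    ∀ {L : List α} {a x : α}, List.Chain R a L → x ∈ L → ∃ y, R y x ∧ (y = a ∨ y ∈ L)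
  | [], _, x, _, hx => absurd hx (List.not_mem_nil)
  | b :: t, a, x, hch, hx => by
    simp only [List.Chain, List.isChain_cons_cons] at hch
    rcases List.mem_cons.mp hx with rfl | hx'
    · exact ⟨a, hch.1, Or.inl rfl⟩
    · obtain ⟨y, hy, hy'⟩ := chain_pred hch.2 hx'
      refine ⟨y, hy, Or.inr ?_⟩
      rcases hy' with rfl | h'
      · exact List.mem_cons_self
      · exact List.mem_cons_of_mem _ h'

lemma cycle_pred {α : Type*} {R : α → α → Prop} {γ : List α} (hγ : IsCycleList R γ)
    {x : α} (hx : x ∈ γ) : ∃ y ∈ γ, R y x := by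
  match γ, hγ with
  | a :: l, ⟨hnd, hch⟩ =>
    have hx' : x ∈ l ++ [a] := by
      rcases List.mem_cons.mp hx with rfl | h
      · simp
      · exact List.mem_append_left _ h
    obtain ⟨y, hy, hy'⟩ := chain_pred hch hx'
    refine ⟨y, ?_, hy⟩
    rcases hy' with rfl | h
    · exact List.mem_cons_self
    · rcases List.mem_append.mp h with h | h
      · exact List.mem_cons_of_mem _ h
      · simp only [List.mem_singleton] at h
        simp [h]

lemma isCycleList_rotate_one {α : Type*} {R : α → α → Prop} {a : α} {l : List α}
    (h : IsCycleList R (a :: l)) : IsCycleList R (l ++ [a]) := by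
  obtain ⟨hnd, hch⟩ := h
  match l with
  | [] => exact ⟨by simp, by simpa using hch⟩
  | b :: t =>
    simp only [List.cons_append, List.Chain, List.isChain_cons_cons] at hch
    refine ⟨?_, ?_⟩
    · have hperm : (b :: (t ++ [a])).Perm (a :: b :: t) :=
        ((List.perm_append_singleton a t).cons b).trans (List.Perm.swap a b t)
      exact hperm.symm.nodup hnd
    · show List.Chain R b ((t ++ [a]) ++ [b])
      rw [List.append_assoc]
      rw [show ([a] ++ [b] : List α) = a :: [b] from rfl]
      simp only [List.Chain]
      rw [List.isChain_cons_split]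
      exact ⟨hch.2, List.isChain_pair.mpr hch.1⟩

lemma isCycleList_rotate {α : Type*} {R : α → α → Prop} :
    ∀ (n : ℕ) {γ : List α}, IsCycleList R γ → IsCycleList R (γ.rotate n)
  | 0, γ, h => by simpa using h
  | n + 1, [], h => h.elim
  | n + 1, a :: l, h => by
    rw [List.rotate_cons_succ]
    exact isCycleList_rotate n (isCycleList_rotate_one h)

lemma exists_rotated_cons {α : Type*} {γ : List α} {x : α} (hx : x ∈ γ) :
    ∃ n l, γ.rotate n = x :: l := by
  obtain ⟨i, hilt, hi⟩ := List.mem_iff_getElem.mp hx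
  refine ⟨i, γ.drop (i + 1) ++ γ.take i, ?_⟩
  rw [List.rotate_eq_drop_append_take hilt.le, List.drop_eq_getElem_cons hilt, hi]
  simp

end Aux

section Aux2

variable {V : Type*} [DecidableEq V] {G : SimpleGraph V} {m : Finset (Finset V × Finset V)}

lemma cycle_edge_matched {γ : List (Finset V)}
    (hγ : IsCycleList (MStep (GraphArc G) m) γ) {σ : Finset V} (hσ : σ ∈ γ)
    (h2 : σ.card = 2) : ∃ τ, (σ, τ) ∈ m := by
  obtain ⟨z, hz, hstep⟩ := cycle_pred hγ hσ
  rcases hstep with ⟨hA, -⟩ | ⟨-, hmem⟩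
  · have := (graphArc_cards hA).2.1; omega
  · exact ⟨z, hmem⟩

lemma cycle_vertex_pred {γ : List (Finset V)}
    (hγ : IsCycleList (MStep (GraphArc G) m) γ) {τ : Finset V} (hτ : τ ∈ γ)
    (h1 : τ.card = 1) : ∃ σ ∈ γ, GraphArc G σ τ ∧ (σ, τ) ∉ m := by
  obtain ⟨z, hz, hstep⟩ := cycle_pred hγ hτ
  rcases hstep with ⟨hA, hnm⟩ | ⟨hA, -⟩
  · exact ⟨z, hz, hA, hnm⟩
  · have := (graphArc_cards hA).1; omega

lemma step_back (hm : IsMatching (GraphArc G) m) {γ : List (Finset V)}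
    (hγ : IsCycleList (MStep (GraphArc G) m) γ) {σ τ : Finset V}
    (hp : (σ, τ) ∈ m) (hσ : σ ∈ γ) :
    τ ∈ γ ∧ ∃ σ' ∈ γ, ∃ τ', (σ', τ') ∈ m ∧ GraphArc G σ' τ ∧ (σ', τ) ∉ m := by
  have hA : GraphArc G σ τ := hm.1 _ hp
  have hσ2 : σ.card = 2 := (graphArc_cards hA).1
  have hτ1 : τ.card = 1 := (graphArc_cards hA).2.1
  obtain ⟨z, hz, hstep⟩ := cycle_pred hγ hσ
  have hzτ : z = τ := by
    rcases hstep with ⟨hA', -⟩ | ⟨-, hmem⟩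
    · have := (graphArc_cards hA').2.1; omega
    · have := matching_eq_of_fst hm hmem hp rfl
      exact congrArg Prod.snd this
  subst hzτ
  obtain ⟨σ', hσ'γ, hA'', hnm⟩ := cycle_vertex_pred hγ hz hτ1
  obtain ⟨τ', hτ'⟩ := cycle_edge_matched hγ hσ'γ (graphArc_cards hA'').1
  exact ⟨hz, σ', hσ'γ, τ', hτ', hA'', hnm⟩

lemma exists_matched_edge {γ : List (Finset V)}
    (hγ : IsCycleList (MStep (GraphArc G) m) γ) :
    ∃ σ ∈ γ, ∃ τ, (σ, τ) ∈ m := by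
  match γ, hγ with
  | a :: l, hγ =>
    have ha : a ∈ a :: l := List.mem_cons_self
    obtain ⟨z, hz, hstep⟩ := cycle_pred hγ ha
    rcases hstep with ⟨hA, -⟩ | ⟨-, hmem⟩
    · exact ⟨z, hz, cycle_edge_matched hγ hz (graphArc_cards hA).1⟩
    · exact ⟨a, ha, z, hmem⟩

lemma singleton_union_card {a b : V} (h : ({a} : Finset V) ≠ {b}) :
    ({a, b} : Finset V).card = 2 := by
  have hab : a ≠ b := by rintro rfl; exact h rfl
  rw [Finset.card_insert_of_notMem (by simp [hab]), Finset.card_singleton]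

lemma three_matched (hm : IsMatching (GraphArc G) m) {γ : List (Finset V)}
    (hγ : IsCycleList (MStep (GraphArc G) m) γ) :
    ∃ p1 p2 p3 : Finset V × Finset V, p1 ∈ m ∧ p2 ∈ m ∧ p3 ∈ m ∧
      p1.1 ∈ γ ∧ p2.1 ∈ γ ∧ p3.1 ∈ γ ∧ p1 ≠ p2 ∧ p1 ≠ p3 ∧ p2 ≠ p3 := by
  obtain ⟨σ1, hσ1γ, τ1, hp1⟩ := exists_matched_edge hγ
  obtain ⟨hτ1γ, σ2, hσ2γ, τ2, hp2, hA21, hn21⟩ := step_back hm hγ hp1 hσ1γ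
  have hσ21 : σ2 ≠ σ1 := by rintro rfl; exact hn21 hp1
  have hτ21 : τ2 ≠ τ1 := by rintro rfl; exact hn21 hp2
  obtain ⟨hτ2γ, σ3, hσ3γ, τ3, hp3, hA32, hn32⟩ := step_back hm hγ hp2 hσ2γ
  have hσ32 : σ3 ≠ σ2 := by rintro rfl; exact hn32 hp2
  have hσ31 : σ3 ≠ σ1 := by
    rintro rfl
    -- now GraphArc σ3 τ2 and GraphArc σ3 τ1 (σ3 = σ1), derive σ1 = σ2
    have hA11 : GraphArc G σ3 τ1 := hm.1 _ hp1
    have hA22 : GraphArc G σ2 τ2 := hm.1 _ hp2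
    obtain ⟨a, ha⟩ := Finset.card_eq_one.mp (graphArc_cards hA11).2.1
    obtain ⟨b, hb⟩ := Finset.card_eq_one.mp (graphArc_cards hA22).2.1
    have hsub1 : τ1 ∪ τ2 ⊆ σ3 :=
      Finset.union_subset (graphArc_cards hA11).2.2 (graphArc_cards hA32).2.2
    have hsub2 : τ1 ∪ τ2 ⊆ σ2 :=
      Finset.union_subset (graphArc_cards hA21).2.2 (graphArc_cards hA22).2.2
    have hcard : (τ1 ∪ τ2).card = 2 := by
      rw [ha, hb]
      exact singleton_union_card (by rw [← ha, ← hb]; exact fun h => hτ21 h.symm)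
    have h1 : τ1 ∪ τ2 = σ3 :=
      Finset.eq_of_subset_of_card_le hsub1 (by rw [hcard, (graphArc_cards hA11).1])
    have h2 : τ1 ∪ τ2 = σ2 :=
      Finset.eq_of_subset_of_card_le hsub2 (by rw [hcard, (graphArc_cards hA22).1])
    exact hσ21 (h2 ▸ h1)
  refine ⟨(σ1, τ1), (σ2, τ2), (σ3, τ3), hp1, hp2, hp3, hσ1γ, hσ2γ, hσ3γ, ?_, ?_, ?_⟩
  · intro h; exact hσ21 (congrArg Prod.fst h).symm
  · intro h; exact hσ31 (congrArg Prod.fst h).symm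
  · intro h; exact hσ32 (congrArg Prod.fst h).symm

lemma cycle_det (hm : IsMatching (GraphArc G) m) {γ : List (Finset V)}
    (hγ : IsCycleList (MStep (GraphArc G) m) γ) {x y y' : Finset V} (hx : x ∈ γ)
    (h1 : MStep (GraphArc G) m x y) (h2 : MStep (GraphArc G) m x y') : y = y' := by
  rcases h1 with ⟨hA1, hn1⟩ | ⟨hA1, hm1⟩
  · rcases h2 with ⟨hA2, hn2⟩ | ⟨hA2, hm2⟩
    · -- both forward arcs from the edge-face x
      obtain ⟨τ, hτ⟩ := cycle_edge_matched hγ hx (graphArc_cards hA1).1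
      have hAτ : GraphArc G x τ := hm.1 _ hτ
      obtain ⟨u, v, huv, rfl, hy1⟩ := hA1
      have hy2 := mem_pair_of_arc hA2
      have hyτ := mem_pair_of_arc hAτ
      have hyne : y ≠ τ := by rintro rfl; exact hn1 hτ
      have hy'ne : y' ≠ τ := by rintro rfl; exact hn2 hτ
      have huvne : ({u} : Finset V) ≠ {v} := by
        simp only [ne_eq, Finset.singleton_inj]; exact huv.ne
      rcases hyτ with rfl | rfl
      · rcases hy1 with rfl | rfl
        · exact absurd rfl hyne
        · rcases hy2 with rfl | rfl
          · exact absurd rfl hy'ne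
          · rfl
      · rcases hy1 with rfl | rfl
        · rcases hy2 with rfl | rfl
          · rfl
          · exact absurd rfl hy'ne
        · exact absurd rfl hyne
    · -- x both edge-face and vertex-face: impossible
      have := (graphArc_cards hA1).1
      have := (graphArc_cards hA2).2.1
      omega
  · rcases h2 with ⟨hA2, hn2⟩ | ⟨hA2, hm2⟩
    · have := (graphArc_cards hA1).2.1
      have := (graphArc_cards hA2).1
      omega
    · have := matching_eq_of_snd hm hm1 hm2 rfl
      exact congrArg Prod.fst this

lemma chain_unique {α : Type*} {R : α → α → Prop} {γ : List α} {x₀ : α}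
    (hdet : ∀ a ∈ γ, ∀ y y', R a y → R a y' → y = y') :
    ∀ (l l' : List α) (x : α), x ∈ γ → (∀ a ∈ l, a ∈ γ) →
      List.Chain R x (l ++ [x₀]) → List.Chain R x (l' ++ [x₀]) →
      x₀ ∉ l → x₀ ∉ l' → l = l'
  | [], [], x, _, _, _, _, _, _ => rfl
  | [], b' :: t', x, hxγ, _, h1, h2, _, hx₀' => by
    simp only [List.nil_append, List.Chain, List.isChain_pair] at h1
    simp only [List.cons_append, List.Chain, List.isChain_cons_cons] at h2
    exact absurd (by rw [← hdet x hxγ _ _ h2.1 h1]; exact List.mem_cons_self) hx₀'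
  | b :: t, [], x, hxγ, hlγ, h1, h2, hx₀, _ => by
    simp only [List.nil_append, List.Chain, List.isChain_pair] at h2
    simp only [List.cons_append, List.Chain, List.isChain_cons_cons] at h1
    exact absurd (by rw [← hdet x hxγ _ _ h1.1 h2]; exact List.mem_cons_self) hx₀
  | b :: t, b' :: t', x, hxγ, hlγ, h1, h2, hx₀, hx₀' => by
    simp only [List.cons_append, List.Chain, List.isChain_cons_cons] at h1 h2
    have hbb : b = b' := hdet x hxγ _ _ h1.1 h2.1
    subst hbb
    have := chain_unique hdet t t' b (hlγ b (List.mem_cons_self))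
      (fun a ha => hlγ a (List.mem_cons_of_mem _ ha)) h1.2 h2.2
      (fun h => hx₀ (List.mem_cons_of_mem _ h)) (fun h => hx₀' (List.mem_cons_of_mem _ h))
    rw [this]

lemma cycles_rotated (hm : IsMatching (GraphArc G) m) {γ γ' : List (Finset V)}
    (hγ : IsCycleList (MStep (GraphArc G) m) γ) (hγ' : IsCycleList (MStep (GraphArc G) m) γ')
    {x : Finset V} (hx : x ∈ γ) (hx' : x ∈ γ') : γ ~r γ' := by
  obtain ⟨n, l, hrot⟩ := exists_rotated_cons hx
  obtain ⟨n', l', hrot'⟩ := exists_rotated_cons hx'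
  have hδ : IsCycleList (MStep (GraphArc G) m) (x :: l) := hrot ▸ isCycleList_rotate n hγ
  have hδ' : IsCycleList (MStep (GraphArc G) m) (x :: l') := hrot' ▸ isCycleList_rotate n' hγ'
  have hll : l = l' := by
    refine chain_unique (γ := x :: l) (fun a ha y y' h h' => cycle_det hm hδ ha h h')
      l l' x (List.mem_cons_self) (fun a ha => List.mem_cons_of_mem _ ha)
      hδ.2 hδ'.2 ?_ ?_
    · exact (List.nodup_cons.mp hδ.1).1
    · exact (List.nodup_cons.mp hδ'.1).1
  have r1 : γ ~r (x :: l) := ⟨n, hrot⟩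
  have r2 : γ' ~r (x :: l') := ⟨n', hrot'⟩
  exact r1.trans (hll ▸ r2.symm)

end Aux2

section Aux3

/-- The edge-face (as a `Finset`) associated to an unordered pair. -/
def edgeFace {V : Type*} [DecidableEq V] (e : Sym2 V) : Finset V :=
  Sym2.lift ⟨fun x y => ({x, y} : Finset V), fun x y => Finset.pair_comm x y⟩ e

variable {V : Type*} [DecidableEq V]

@[simp] lemma edgeFace_mk (x y : V) : edgeFace s(x, y) = {x, y} := rfl

lemma edgeFace_injective : Function.Injective (edgeFace (V := V)) := by
  intro e e'
  induction e using Sym2.ind with | _ x y =>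
  induction e' using Sym2.ind with | _ x' y' =>
  intro h
  simp only [edgeFace_mk] at h
  rw [Sym2.eq_iff]
  have hx : x = x' ∨ x = y' := by
    have : x ∈ ({x', y'} : Finset V) := h ▸ (by simp)
    simpa using this
  have hy : y = x' ∨ y = y' := by
    have : y ∈ ({x', y'} : Finset V) := h ▸ (by simp)
    simpa using this
  have hx' : x' = x ∨ x' = y := by
    have : x' ∈ ({x, y} : Finset V) := h ▸ (by simp)
    simpa using this
  have hy' : y' = x ∨ y' = y := by
    have : y' ∈ ({x, y} : Finset V) := h ▸ (by simp)
    simpa using this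
  rcases hx with rfl | rfl <;> rcases hy with rfl | rfl <;> simp_all

lemma part2_bound {V : Type*} [Fintype V] [DecidableEq V] (G : SimpleGraph V)
    (m' : Finset (Finset V × Finset V)) (hm' : IsMatching (GraphArc G) m') :
    3 * numCycles (GraphArc G) m' ≤ m'.card := by
  classical
  have hCfin : (cyclesOf (GraphArc G) m').Finite := by
    apply (List.finite_length_le (Finset V) (Fintype.card (Finset V))).subset
    rintro l hl
    match l, hl with
    | a :: t, ⟨hnd, _⟩ => exact hnd.length_le_card
  have hQfin : (Quotient.mk (List.IsRotated.setoid (Finset V)) ''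
      cyclesOf (GraphArc G) m').Finite := hCfin.image _
  rw [numCycles, Set.ncard_eq_toFinset_card _ hQfin]
  set Qf := hQfin.toFinset with hQf
  set S : Quotient (List.IsRotated.setoid (Finset V)) → Finset (Finset V × Finset V) :=
    Quotient.lift (fun γ => m'.filter (fun p => p.1 ∈ γ))
      (fun a b hab => by
        ext p
        simp only [Finset.mem_filter]
        rw [(hab : a ~r b).mem_iff]) with hS
  have hSmk : ∀ γ : List (Finset V), S (Quotient.mk (List.IsRotated.setoid (Finset V)) γ)
      = m'.filter (fun p => p.1 ∈ γ) := fun γ => rfl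
  have hrep : ∀ q ∈ Qf, ∃ γ, IsCycleList (MStep (GraphArc G) m') γ ∧
      Quotient.mk (List.IsRotated.setoid (Finset V)) γ = q := by
    intro q hq
    rw [hQf, Set.Finite.mem_toFinset] at hq
    obtain ⟨γ, hγ, h⟩ := hq
    exact ⟨γ, hγ, h⟩
  have hsub : Qf.biUnion S ⊆ m' := by
    intro p hp
    obtain ⟨q, hq, hpq⟩ := Finset.mem_biUnion.mp hp
    obtain ⟨γ, -, rfl⟩ := hrep q hq
    rw [hSmk] at hpq
    exact (Finset.mem_filter.mp hpq).1
  have hcard3 : ∀ q ∈ Qf, 3 ≤ (S q).card := by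
    intro q hq
    obtain ⟨γ, hγ, rfl⟩ := hrep q hq
    obtain ⟨p1, p2, p3, h1, h2, h3, g1, g2, g3, n12, n13, n23⟩ := three_matched hm' hγ
    rw [hSmk]
    have hsub3 : ({p1, p2, p3} : Finset (Finset V × Finset V)) ⊆
        m'.filter (fun p => p.1 ∈ γ) := by
      intro p hp
      simp only [Finset.mem_insert, Finset.mem_singleton] at hp
      rcases hp with rfl | rfl | rfl <;> exact Finset.mem_filter.mpr ⟨‹_›, ‹_›⟩
    calc 3 = ({p1, p2, p3} : Finset (Finset V × Finset V)).card := by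
            rw [Finset.card_insert_of_notMem (by simp [n12, n13]),
              Finset.card_insert_of_notMem (by simp [n23]), Finset.card_singleton]
      _ ≤ _ := Finset.card_le_card hsub3
  have hdisj : ∀ q ∈ Qf, ∀ q' ∈ Qf, q ≠ q' → Disjoint (S q) (S q') := by
    intro q hq q' hq' hne
    obtain ⟨γ, hγ, rfl⟩ := hrep q hq
    obtain ⟨γ', hγ', rfl⟩ := hrep q' hq'
    rw [Finset.disjoint_left]
    intro p hp hp'
    rw [hSmk] at hp hp'
    exact hne (Quotient.sound (cycles_rotated hm' hγ hγ'
      (Finset.mem_filter.mp hp).2 (Finset.mem_filter.mp hp').2))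
  calc 3 * Qf.card = ∑ _q ∈ Qf, 3 := by rw [Finset.sum_const, smul_eq_mul, mul_comm]
    _ ≤ ∑ q ∈ Qf, (S q).card := Finset.sum_le_sum hcard3
    _ = (Qf.biUnion S).card := (Finset.card_biUnion hdisj).symm
    _ ≤ m'.card := Finset.card_le_card hsub

end Aux3

/-- if the oriented cycles induced by a matching `m` on `F(G)` project
to the pairwise vertex-disjoint cycles `γ_1, …, γ_j` of `G`, then `m` has at least
`ℓ(γ_1) + ⋯ + ℓ(γ_j)` arcs.  In particular (cycles of a simple graph having length
at least 3) every matching `m` on `F(G)` has at least `3 · J(m)` arcs, i.e. the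
simplices of `M(G)` in filtration degree `j` have dimension at least `3j − 1`. -/
theorem matching_card_lower_bound {V : Type*} [Fintype V] [DecidableEq V]
    (G : SimpleGraph V)
    (m : Finset (Finset V × Finset V)) (hm : IsMatching (GraphArc G) m)
    (j : ℕ) (v : Fin j → V) (w : ∀ i, G.Walk (v i) (v i))
    (hc : ∀ i, (w i).IsCycle)
    (hd : ∀ i i', i ≠ i' → ∀ x : V, x ∈ (w i).support → x ∉ (w i').support)
    (hproj : ∀ i, ∃ γ ∈ cyclesOf (GraphArc G) m,
        ∀ x y : V, x ≠ y → (({x, y} : Finset V) ∈ γ ↔ s(x, y) ∈ (w i).edges)) :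
    (∑ i, (w i).length) ≤ m.card ∧
    ∀ m' : Finset (Finset V × Finset V), IsMatching (GraphArc G) m' →
      3 * numCycles (GraphArc G) m' ≤ m'.card := by
  classical
  constructor
  · have hkey : ∀ i : Fin j, ∀ e ∈ (w i).edges, edgeFace e ∈ m.image Prod.fst := by
      intro i e he
      induction e using Sym2.ind with | _ x y =>
      have hxy : x ≠ y := ((w i).adj_of_mem_edges he).ne
      obtain ⟨γ, hγ, hiff⟩ := hproj i
      have hmem : ({x, y} : Finset V) ∈ γ := (hiff x y hxy).mpr he
      have hcard : ({x, y} : Finset V).card = 2 := by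
        rw [Finset.card_insert_of_notMem (by simp [hxy]), Finset.card_singleton]
      obtain ⟨τ, hτ⟩ := cycle_edge_matched hγ hmem hcard
      exact Finset.mem_image.mpr ⟨({x, y}, τ), hτ, rfl⟩
    set E : Finset (Finset V) :=
      Finset.univ.biUnion (fun i : Fin j => ((w i).edges.toFinset.image edgeFace)) with hE
    have hEsub : E ⊆ m.image Prod.fst := by
      intro σ hσ
      obtain ⟨i, -, hσ'⟩ := Finset.mem_biUnion.mp hσ
      obtain ⟨e, he, rfl⟩ := Finset.mem_image.mp hσ'
      exact hkey i e (List.mem_toFinset.mp he)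
    have hdisjE : ∀ i ∈ (Finset.univ : Finset (Fin j)), ∀ i' ∈ (Finset.univ : Finset (Fin j)),
        i ≠ i' →
        Disjoint ((w i).edges.toFinset.image edgeFace)
          ((w i').edges.toFinset.image edgeFace) := by
      intro i _ i' _ hii
      rw [Finset.disjoint_left]
      rintro σ h1 h2
      obtain ⟨e, he, rfl⟩ := Finset.mem_image.mp h1
      obtain ⟨e', he', heq⟩ := Finset.mem_image.mp h2
      obtain rfl := edgeFace_injective heq
      induction e' using Sym2.ind with | _ x y =>
      exact hd i i' hii x ((w i).fst_mem_support_of_mem_edges (List.mem_toFinset.mp he))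
        ((w i').fst_mem_support_of_mem_edges (List.mem_toFinset.mp he'))
    have hcardE : E.card = ∑ i, (w i).length := by
      rw [hE, Finset.card_biUnion hdisjE]
      refine Finset.sum_congr rfl fun i _ => ?_
      rw [Finset.card_image_of_injective _ edgeFace_injective,
        List.toFinset_card_of_nodup (hc i).isCircuit.isTrail.edges_nodup, (w i).length_edges]
    calc ∑ i, (w i).length = E.card := hcardE.symm
      _ ≤ (m.image Prod.fst).card := Finset.card_le_card hEsub
      _ ≤ m.card := Finset.card_image_le
  · intro m' hm'
    exact part2_bound G m' hm'
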